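/- Consider the fuzzy frame F with W = {w, w', w''}, R(w,w') = R(w,w'') = 2/3 and R = 0 on all other pairs, and the KGinv-model on F in which every propositional variable q satisfies v(q,w) = 1, v(q,w') = 1/5 and v(q,w'') = 1/4. Then for every formula τ ∈ L_inv: v(τ,w'') = 0 iff v(τ,w') = 0; v(τ,w'') = 1/4 iff v(τ,w') = 1/5; v(τ,w'') = 3/4 iff v(τ,w') = 4/5; and v(τ,w'') = 1 iff v(τ,w') = 1. -/
import Mathlib



noncomputable def Gimp (x y : ℝ) : ℝ := if x ≤ y then 1 else y

inductive Fml : Type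
  | var : ℕ → Fml
  | inv : Fml → Fml
  | and : Fml → Fml → Fml
  | imp : Fml → Fml → Fml
  | box : Fml → Fml
  | dia : Fml → Fml
  deriving DecidableEq

noncomputable def Fml.eval {W : Type} (R : W → W → ℝ) (v : ℕ → W → ℝ) : Fml → W → ℝ
  | .var p, w => v p w
  | .inv φ, w => 1 - Fml.eval R v φ w
  | .and φ χ, w => min (Fml.eval R v φ w) (Fml.eval R v χ w)
  | .imp φ χ, w => Gimp (Fml.eval R v φ w) (Fml.eval R v χ w)
  | .box φ, w => sInf (Set.range fun w' => Gimp (R w w') (Fml.eval R v φ w'))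
  | .dia φ, w => sSup (Set.range fun w' => min (R w w') (Fml.eval R v φ w'))

def KGinvValid {W : Type} (R : W → W → ℝ) (φ : Fml) : Prop :=
  ∀ v : ℕ → W → ℝ, (∀ p w, v p w ∈ Set.Icc (0:ℝ) 1) → ∀ w : W, Fml.eval R v φ w = 1

noncomputable def R3 : Fin 3 → Fin 3 → ℝ :=
  fun i j => if i = 0 ∧ (j = 1 ∨ j = 2) then 2/3 else 0

noncomputable def v3 : ℕ → Fin 3 → ℝ :=
  fun _ w => if w = 0 then 1 else if w = 1 then 1/5 else 1/4

lemma range3 (f : Fin 3 → ℝ) : Set.range f = {f 0, f 1, f 2} := by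
  ext x
  constructor
  · rintro ⟨i, rfl⟩; fin_cases i <;> simp
  · rintro (rfl | rfl | rfl) <;> exact ⟨_, rfl⟩

lemma sInf3 (f : Fin 3 → ℝ) : sInf (Set.range f) = min (f 0) (min (f 1) (f 2)) := by
  rw [range3, csInf_insert (Set.toFinite _).bddBelow ⟨f 1, by simp⟩, csInf_pair]

lemma sSup3 (f : Fin 3 → ℝ) : sSup (Set.range f) = max (f 0) (max (f 1) (f 2)) := by
  rw [range3, csSup_insert (Set.toFinite _).bddAbove ⟨f 1, by simp⟩, csSup_pair]

lemma gimp_mem {y : ℝ} (x : ℝ) (hy : y ∈ Set.Icc (0:ℝ) 1) : Gimp x y ∈ Set.Icc (0:ℝ) 1 := by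
  unfold Gimp; split
  · norm_num
  · exact hy

lemma R3_nonneg (i j : Fin 3) : 0 ≤ R3 i j := by
  unfold R3; split <;> norm_num

lemma R3_one (j : Fin 3) : R3 1 j = 0 := by
  simp [R3]

lemma R3_two (j : Fin 3) : R3 2 j = 0 := by
  simp [R3]

def Pair2 (a b : ℝ) : Prop :=
  (a = 0 ∧ b = 0) ∨ (a = 1/5 ∧ b = 1/4) ∨ (a = 4/5 ∧ b = 3/4) ∨ (a = 1 ∧ b = 1)

lemma key (τ : Fml) :
    (∀ w, Fml.eval R3 v3 τ w ∈ Set.Icc (0:ℝ) 1) ∧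
      Pair2 (Fml.eval R3 v3 τ 1) (Fml.eval R3 v3 τ 2) := by
  induction τ with
  | var p =>
    constructor
    · intro w; fin_cases w <;> simp [Fml.eval, v3] <;> norm_num
    · right; left; constructor <;> simp [Fml.eval, v3]
  | inv φ ih =>
    obtain ⟨hm, hp⟩ := ih
    constructor
    · intro w
      have := hm w
      simp only [Fml.eval, Set.mem_Icc] at *
      constructor <;> linarith [this.1, this.2]
    · simp only [Fml.eval]
      rcases hp with ⟨h1, h2⟩ | ⟨h1, h2⟩ | ⟨h1, h2⟩ | ⟨h1, h2⟩ <;>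
        rw [h1, h2] <;> unfold Pair2 <;> norm_num
  | and φ χ ihφ ihχ =>
    obtain ⟨hmφ, hpφ⟩ := ihφ
    obtain ⟨hmχ, hpχ⟩ := ihχ
    constructor
    · intro w
      have h1 := hmφ w
      have h2 := hmχ w
      simp only [Fml.eval, Set.mem_Icc] at *
      exact ⟨le_min h1.1 h2.1, (min_le_left _ _).trans h1.2⟩
    · simp only [Fml.eval]
      rcases hpφ with ⟨h1, h2⟩ | ⟨h1, h2⟩ | ⟨h1, h2⟩ | ⟨h1, h2⟩ <;>
        rcases hpχ with ⟨h3, h4⟩ | ⟨h3, h4⟩ | ⟨h3, h4⟩ | ⟨h3, h4⟩ <;>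
        rw [h1, h2, h3, h4] <;> unfold Pair2 <;> norm_num
  | imp φ χ ihφ ihχ =>
    obtain ⟨hmφ, hpφ⟩ := ihφ
    obtain ⟨hmχ, hpχ⟩ := ihχ
    constructor
    · intro w
      exact gimp_mem _ (hmχ w)
    · simp only [Fml.eval]
      rcases hpφ with ⟨h1, h2⟩ | ⟨h1, h2⟩ | ⟨h1, h2⟩ | ⟨h1, h2⟩ <;>
        rcases hpχ with ⟨h3, h4⟩ | ⟨h3, h4⟩ | ⟨h3, h4⟩ | ⟨h3, h4⟩ <;>
        rw [h1, h2, h3, h4] <;> unfold Pair2 Gimp <;> norm_num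
  | box φ ih =>
    obtain ⟨hm, _⟩ := ih
    have hval : ∀ w : Fin 3, Fml.eval R3 v3 (Fml.box φ) w =
        min (Gimp (R3 w 0) (Fml.eval R3 v3 φ 0))
          (min (Gimp (R3 w 1) (Fml.eval R3 v3 φ 1)) (Gimp (R3 w 2) (Fml.eval R3 v3 φ 2))) := by
      intro w
      simp only [Fml.eval]
      exact sInf3 _
    have hone : ∀ w : Fin 3, (∀ j, R3 w j = 0) → Fml.eval R3 v3 (Fml.box φ) w = 1 := by
      intro w hw
      rw [hval w]
      have : ∀ j : Fin 3, Gimp (R3 w j) (Fml.eval R3 v3 φ j) = 1 := by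
        intro j
        rw [hw j]
        unfold Gimp
        rw [if_pos (hm j).1]
      rw [this 0, this 1, this 2]; norm_num
    constructor
    · intro w
      rw [hval w]
      have g0 := gimp_mem (R3 w 0) (hm 0)
      have g1 := gimp_mem (R3 w 1) (hm 1)
      have g2 := gimp_mem (R3 w 2) (hm 2)
      exact ⟨le_min g0.1 (le_min g1.1 g2.1), (min_le_left _ _).trans g0.2⟩
    · right; right; right
      exact ⟨hone 1 R3_one, hone 2 R3_two⟩
  | dia φ ih =>
    obtain ⟨hm, _⟩ := ih
    have hval : ∀ w : Fin 3, Fml.eval R3 v3 (Fml.dia φ) w =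
        max (min (R3 w 0) (Fml.eval R3 v3 φ 0))
          (max (min (R3 w 1) (Fml.eval R3 v3 φ 1)) (min (R3 w 2) (Fml.eval R3 v3 φ 2))) := by
      intro w
      simp only [Fml.eval]
      exact sSup3 _
    have hzero : ∀ w : Fin 3, (∀ j, R3 w j = 0) → Fml.eval R3 v3 (Fml.dia φ) w = 0 := by
      intro w hw
      rw [hval w]
      have : ∀ j : Fin 3, min (R3 w j) (Fml.eval R3 v3 φ j) = 0 := by
        intro j
        rw [hw j]
        exact min_eq_left (hm j).1
      rw [this 0, this 1, this 2]; norm_num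
    constructor
    · intro w
      rw [hval w]
      constructor
      · exact le_max_of_le_left (le_min (R3_nonneg w 0) (hm 0).1)
      · apply max_le ((min_le_right _ _).trans (hm 0).2)
        exact max_le ((min_le_right _ _).trans (hm 1).2) ((min_le_right _ _).trans (hm 2).2)
    · left
      exact ⟨hzero 1 R3_one, hzero 2 R3_two⟩

theorem statement4 (τ : Fml) :
    (Fml.eval R3 v3 τ 2 = 0 ↔ Fml.eval R3 v3 τ 1 = 0) ∧
    (Fml.eval R3 v3 τ 2 = 1/4 ↔ Fml.eval R3 v3 τ 1 = 1/5) ∧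
    (Fml.eval R3 v3 τ 2 = 3/4 ↔ Fml.eval R3 v3 τ 1 = 4/5) ∧
    (Fml.eval R3 v3 τ 2 = 1 ↔ Fml.eval R3 v3 τ 1 = 1) := by
  have h := (key τ).2
  rcases h with ⟨h1, h2⟩ | ⟨h1, h2⟩ | ⟨h1, h2⟩ | ⟨h1, h2⟩ <;> rw [h1, h2] <;> norm_num
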